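/- Let G = {z ∈ ℂ : Im z > 0, −1/2 ≤ Re z < 1/2, |z| ≥ 1} and let τ ∈ G, with L_τ = {m + k·τ : m, k ∈ ℤ}. There exist g ∈ ℂ and λ ∈ ℂ such that g ∉ L_τ, 2·g ∈ L_τ, and λ·L_τ = L_τ + ℤ·g (i.e. the elliptic curve E = ℂ/L_τ admits a cyclic subgroup C of order 2 with E/C ≅ E) if and only if τ² = −1, or τ² = −2, or τ² = −τ − 2. In particular, there are exactly 3 elliptic curves over ℂ, up to isomorphism, admitting a cyclic subgroup C of order 2 with E/C ≅ E. -/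

import Mathlib

noncomputable section

/-- The lattice `ℤ + ℤτ` as a subset of `ℂ`. -/
def latt (τ : ℂ) : Set ℂ := {z | ∃ m k : ℤ, z = (m : ℂ) + (k : ℂ) * τ}

/-- The additive subgroup of `ℂ` generated by the lattice `ℤ + ℤτ` and a point `g`. -/
def lattAdj (τ g : ℂ) : Set ℂ := {z | ∃ m k l : ℤ, z = (m : ℂ) + (k : ℂ) * τ + (l : ℂ) * g}

lemma indep0 {τ : ℂ} (him : τ.im ≠ 0) (m k : ℤ) (h : (m:ℂ) + (k:ℂ)*τ = 0) : m = 0 ∧ k = 0 := by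
  have h2 : (k:ℝ)*τ.im = 0 := by
    have := congrArg Complex.im h; simpa using this
  have hk : k = 0 := by
    rcases mul_eq_zero.1 h2 with h'|h'
    · exact_mod_cast h'
    · exact absurd h' him
  subst hk
  have h1 : (m:ℝ) = 0 := by
    have := congrArg Complex.re h; simpa using this
  exact ⟨by exact_mod_cast h1, rfl⟩

lemma revAux (τ : ℂ) (him : τ.im ≠ 0) (v : ℤ) (hτ : τ^2 = -2 + (v:ℂ)*τ) :
    ∃ g lam : ℂ, g ∉ latt τ ∧ (2:ℂ)*g ∈ latt τ ∧ (fun x => lam*x) '' latt τ = lattAdj τ g := by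
  refine ⟨τ/2, τ/2, ?_, ?_, ?_⟩
  · rintro ⟨m, k, h⟩
    have h0 : ((2*m : ℤ):ℂ) + ((2*k-1 : ℤ):ℂ)*τ = 0 := by push_cast; linear_combination (-2:ℂ)*h
    obtain ⟨h1, h2⟩ := indep0 him _ _ h0
    omega
  · exact ⟨0, 1, by push_cast; ring⟩
  · ext z
    simp only [Set.mem_image, latt, lattAdj, Set.mem_setOf_eq]
    constructor
    · rintro ⟨w, ⟨m, k, rfl⟩, rfl⟩
      exact ⟨-k, 0, m + k*v, by push_cast; linear_combination (k:ℂ)/2*hτ⟩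
    · rintro ⟨m, k, l, rfl⟩
      refine ⟨((2*k + l + m*v : ℤ):ℂ) + ((-m : ℤ):ℂ)*τ, ⟨_, _, rfl⟩, ?_⟩
      push_cast
      linear_combination (-(m:ℂ)/2)*hτ

lemma revAuxI (τ : ℂ) (him : τ.im ≠ 0) (hτ : τ^2 = -1) :
    ∃ g lam : ℂ, g ∉ latt τ ∧ (2:ℂ)*g ∈ latt τ ∧ (fun x => lam*x) '' latt τ = lattAdj τ g := by
  refine ⟨(1+τ)/2, (1+τ)/2, ?_, ?_, ?_⟩
  · rintro ⟨m, k, h⟩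
    have h0 : ((2*m-1 : ℤ):ℂ) + ((2*k-1 : ℤ):ℂ)*τ = 0 := by push_cast; linear_combination (-2:ℂ)*h
    obtain ⟨h1, h2⟩ := indep0 him _ _ h0
    omega
  · exact ⟨1, 1, by push_cast; ring⟩
  · ext z
    simp only [Set.mem_image, latt, lattAdj, Set.mem_setOf_eq]
    constructor
    · rintro ⟨w, ⟨m, k, rfl⟩, rfl⟩
      exact ⟨0, k, m - k, by push_cast; linear_combination (k:ℂ)/2*hτ⟩
    · rintro ⟨m, k, l, rfl⟩
      refine ⟨((m + k + l : ℤ):ℂ) + ((k - m : ℤ):ℂ)*τ, ⟨_, _, rfl⟩, ?_⟩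
      push_cast
      linear_combination ((k:ℂ)-m)/2*hτ


set_option maxHeartbeats 4000000 in
lemma fwdAux (τ : ℂ) (him : 0 < τ.im) (hre₁ : -(1 / 2) ≤ τ.re) (hre₂ : τ.re < 1 / 2)
    (habs : 1 ≤ ‖τ‖)
    (g lam : ℂ) (hg : g ∉ latt τ) (h2g : (2:ℂ)*g ∈ latt τ)
    (heq : (fun x => lam * x) '' latt τ = lattAdj τ g) :
    (τ ^ 2 = -1 ∨ τ ^ 2 = -2 ∨ τ ^ 2 = -τ - 2) := by
  have him' : τ.im ≠ 0 := ne_of_gt him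
  have indep : ∀ m₁ k₁ m₂ k₂ : ℤ, (m₁:ℂ) + (k₁:ℂ)*τ = (m₂:ℂ) + (k₂:ℂ)*τ → m₁ = m₂ ∧ k₁ = k₂ := by
    intro m₁ k₁ m₂ k₂ h
    have h0 : ((m₁ - m₂ : ℤ):ℂ) + ((k₁ - k₂ : ℤ):ℂ)*τ = 0 := by push_cast; linear_combination h
    obtain ⟨h1, h2⟩ := indep0 him' _ _ h0
    omega
  obtain ⟨m, k, h2g'⟩ := h2g
  have hmem : ∀ z : ℂ, z ∈ lattAdj τ g → ∃ p q : ℤ, lam * ((p:ℂ) + (q:ℂ)*τ) = z := by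
    intro z hz
    rw [← heq] at hz
    obtain ⟨w, ⟨p, q, rfl⟩, hw⟩ := hz
    exact ⟨p, q, hw⟩
  obtain ⟨p, q, hp⟩ := hmem 1 ⟨1, 0, 0, by simp⟩
  obtain ⟨r, s, hr⟩ := hmem τ ⟨0, 1, 0, by simp⟩
  obtain ⟨e, f, he⟩ := hmem g ⟨0, 0, 1, by simp⟩
  have hmem2 : ∀ w : ℂ, w ∈ latt τ → lam * w ∈ lattAdj τ g := by
    intro w hw; rw [← heq]; exact ⟨w, hw, rfl⟩
  obtain ⟨m₁, k₁, l₁, hlam⟩ := hmem2 1 ⟨1, 0, by simp⟩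
  obtain ⟨m₂, k₂, l₂, hlamτ⟩ := hmem2 τ ⟨0, 1, by simp⟩
  rw [mul_one] at hlam
  obtain ⟨a, ha⟩ : ∃ a : ℤ, 2*m₁ + l₁*m = a := ⟨_, rfl⟩
  obtain ⟨b, hb⟩ : ∃ b : ℤ, 2*k₁ + l₁*k = b := ⟨_, rfl⟩
  obtain ⟨c, hc⟩ : ∃ c : ℤ, 2*m₂ + l₂*m = c := ⟨_, rfl⟩
  obtain ⟨d, hd⟩ : ∃ d : ℤ, 2*k₂ + l₂*k = d := ⟨_, rfl⟩
  have hmu : 2*lam = (a:ℂ) + (b:ℂ)*τ := by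
    rw [← ha, ← hb]; push_cast; linear_combination 2*hlam + (l₁:ℂ)*h2g'
  have hmuτ : 2*lam*τ = (c:ℂ) + (d:ℂ)*τ := by
    rw [← hc, ← hd]; push_cast; linear_combination 2*hlamτ + (l₂:ℂ)*h2g'
  have hP1 : p*a + q*c = 2 ∧ p*b + q*d = 0 := by
    refine indep _ _ 2 0 ?_
    push_cast
    linear_combination 2*hp - (p:ℂ)*hmu - (q:ℂ)*hmuτ
  have hP2 : r*a + s*c = 0 ∧ r*b + s*d = 2 := by
    refine indep _ _ 0 2 ?_
    push_cast
    linear_combination 2*hr - (r:ℂ)*hmu - (s:ℂ)*hmuτ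
  -- quadratic relation
  have hquad : (b:ℂ)*τ^2 + (a:ℂ)*τ = (c:ℂ) + (d:ℂ)*τ := by
    linear_combination hmuτ - τ*hmu
  have hquadre := congrArg Complex.re hquad
  have hquadim := congrArg Complex.im hquad
  simp only [Complex.add_re, Complex.add_im, Complex.mul_re, Complex.mul_im,
    Complex.intCast_re, Complex.intCast_im, pow_two] at hquadre hquadim
  have hd' : (d:ℝ) = a + 2*b*τ.re := by
    have h0 : ((d:ℝ) - a - 2*(b:ℝ)*τ.re)*τ.im = 0 := by linear_combination -hquadim
    rcases mul_eq_zero.1 h0 with h'|h'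
    · linarith
    · exact absurd h' him'
  have hc' : (c:ℝ) = -(b:ℝ)*(τ.re^2 + τ.im^2) := by
    linear_combination -hquadre - τ.re*hd'
  have hDR : ((a*d - b*c : ℤ):ℝ) = ((a:ℝ)+b*τ.re)^2 + ((b:ℝ)*τ.im)^2 := by
    push_cast
    linear_combination (a:ℝ)*hd' - (b:ℝ)*hc'
  have hlamne : lam ≠ 0 := by
    intro h; rw [h, zero_mul] at hp; exact one_ne_zero hp.symm
  have hDpos : 0 < a*d - b*c := by
    by_contra hcon
    push_neg at hcon
    have hconR : ((a*d - b*c : ℤ):ℝ) ≤ 0 := by exact_mod_cast hcon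
    have hs1 : ((a:ℝ)+b*τ.re)^2 = 0 := by
      linarith only [hconR, hDR, sq_nonneg ((a:ℝ)+b*τ.re), sq_nonneg ((b:ℝ)*τ.im)]
    have hs2 : ((b:ℝ)*τ.im)^2 = 0 := by
      linarith only [hconR, hDR, sq_nonneg ((a:ℝ)+b*τ.re), sq_nonneg ((b:ℝ)*τ.im)]
    have h1 : (a:ℝ) + b*τ.re = 0 ∧ (b:ℝ)*τ.im = 0 :=
      ⟨pow_eq_zero_iff two_ne_zero |>.mp hs1, pow_eq_zero_iff two_ne_zero |>.mp hs2⟩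
    have hb0 : (b:ℝ) = 0 := by
      rcases mul_eq_zero.1 h1.2 with h'|h'
      · exact h'
      · exact absurd h' him'
    have ha0 : (a:ℝ) = 0 := by have := h1.1; rw [hb0] at this; linarith
    have hb0' : b = 0 := by exact_mod_cast hb0
    have ha0' : a = 0 := by exact_mod_cast ha0
    have h2 : 2*lam = 0 := by rw [hmu, ha0', hb0']; push_cast; ring
    exact hlamne ((mul_eq_zero.1 h2).resolve_left two_ne_zero)
  have hDP : (a*d - b*c) * (p*s - q*r) = 4 := by
    have hprod : (p*a+q*c)*(r*b+s*d) - (p*b+q*d)*(r*a+s*c) = 2*2 - 0*0 := by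
      rw [hP1.1, hP1.2, hP2.1, hP2.2]
    linear_combination hprod
  obtain ⟨DD, hDD⟩ : ∃ D : ℤ, a*d - b*c = D := ⟨_, rfl⟩
  obtain ⟨PP, hPP⟩ : ∃ P : ℤ, p*s - q*r = P := ⟨_, rfl⟩
  rw [hDD, hPP] at hDP
  rw [hDD] at hDpos hDR
  have hPpos : 0 < PP := by
    by_contra hcon
    push_neg at hcon
    have h0 : DD * PP ≤ 0 := by
      have := mul_le_mul_of_nonneg_left hcon hDpos.le
      simpa using this
    linarith only [h0, hDP]
  have hDle : DD ≤ 4 := by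
    have h0 : DD * 1 ≤ DD * PP := mul_le_mul_of_nonneg_left hPpos hDpos.le
    have h1 : DD * 1 = DD := mul_one DD
    linarith only [h0, h1, hDP]
  have hcases : DD = 1 ∨ DD = 2 ∨ DD = 3 ∨ DD = 4 := by omega
  rcases hcases with h1 | h2 | h3 | h4
  · -- DD = 1 : contradiction, index reasons
    exfalso
    subst h1
    have hDc : ((a*d - b*c : ℤ):ℂ) = 1 := by rw [hDD]; norm_num
    push_cast at hDc
    have h12 : lam * ((d:ℂ) + ((-b:ℤ):ℂ)*τ) = 1/2 := by
      push_cast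
      linear_combination (d:ℂ)/2*hmu - (b:ℂ)/2*hmuτ + hDc/2
    have h12m : (1/2 : ℂ) ∈ lattAdj τ g := by
      rw [← heq]; exact ⟨_, ⟨d, -b, rfl⟩, h12⟩
    obtain ⟨m₃, k₃, l₃, h3⟩ := h12m
    have h3' : 2*m₃+l₃*m = 1 ∧ 2*k₃+l₃*k = 0 := by
      refine indep _ _ 1 0 ?_
      push_cast
      linear_combination -2*h3 - (l₃:ℂ)*h2g'
    have hτ2 : lam * (((-c:ℤ):ℂ) + (a:ℂ)*τ) = τ/2 := by
      push_cast
      linear_combination (-(c:ℂ)/2)*hmu + (a:ℂ)/2*hmuτ + τ*hDc/2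
    have hτ2m : (τ/2 : ℂ) ∈ lattAdj τ g := by
      rw [← heq]; exact ⟨_, ⟨-c, a, rfl⟩, hτ2⟩
    obtain ⟨m₄, k₄, l₄, h4'⟩ := hτ2m
    have h4'' : 2*m₄+l₄*m = 0 ∧ 2*k₄+l₄*k = 1 := by
      refine indep _ _ 0 1 ?_
      push_cast
      linear_combination -2*h4' - (l₄:ℂ)*h2g'
    obtain ⟨h31, h32⟩ := h3'
    obtain ⟨h41, h42⟩ := h4''
    have hlm : Odd (l₃*m) := ⟨-m₃, by omega⟩
    have hl₃ : Odd l₃ := (Int.odd_mul.mp hlm).1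
    have hlk : Even (l₃*k) := ⟨-k₃, by omega⟩
    have hke : Even k := by
      rcases Int.even_mul.mp hlk with h|h
      · exact absurd hl₃ (Int.not_odd_iff_even.mpr h)
      · exact h
    have hko : Odd (l₄*k) := ⟨-k₄, by omega⟩
    exact (Int.not_odd_iff_even.mpr hke) (Int.odd_mul.mp hko).2
  · -- DD = 2 : the real case
    subst h2
    push_cast at hDR
    have hxy : 1 ≤ τ.re^2 + τ.im^2 := by
      have h1 : ‖τ‖ ^ 2 = τ.re^2 + τ.im^2 := by
        rw [Complex.sq_norm, Complex.normSq_apply]; ring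
      have h2 : (1:ℝ)*1 ≤ ‖τ‖ * ‖τ‖ :=
        mul_le_mul habs habs zero_le_one (norm_nonneg _)
      linarith only [h1, h2]
    have hx2 : τ.re^2 ≤ 1/4 := by
      have h0 : (0:ℝ) ≤ (τ.re + 1/2)*(1/2 - τ.re) :=
        mul_nonneg (by linarith only [hre₁]) (by linarith only [hre₂])
      linarith only [h0]
    have hy2 : 3/4 ≤ τ.im^2 := by linarith only [hxy, hx2]
    have hb0 : b ≠ 0 := by
      intro hb0
      subst hb0
      have hda : (d:ℝ) = a := by rw [hd']; push_cast; ring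
      have hda' : d = a := by exact_mod_cast hda
      rw [hda'] at hDD
      have h2 : a*a = 2 := by linear_combination hDD
      have t1 : 2*a ≤ 3 := by linarith only [sq_nonneg (a-1), h2]
      have t2 : -3 ≤ 2*a := by linarith only [sq_nonneg (a+1), h2]
      have h3 : a ≤ 1 := by omega
      have h4 : -1 ≤ a := by omega
      interval_cases a <;> omega
    have hbb2 : b*b ≤ 2 := by
      by_contra hcon
      push_neg at hcon
      have h3b : (3:ℝ) ≤ (b:ℝ)*(b:ℝ) := by exact_mod_cast hcon
      have hprod : (3:ℝ)*(3/4) ≤ ((b:ℝ)*(b:ℝ))*(τ.im^2) :=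
        mul_le_mul h3b hy2 (by norm_num) (mul_self_nonneg _)
      linarith only [hprod, hDR, sq_nonneg ((a:ℝ) + b*τ.re)]
    have hb1 : b = 1 ∨ b = -1 := by
      have t1 : 2*b ≤ 3 := by linarith only [sq_nonneg (b-1), hbb2]
      have t2 : -3 ≤ 2*b := by linarith only [sq_nonneg (b+1), hbb2]
      omega
    have hbbR : (b:ℝ)*(b:ℝ) = 1 := by
      have : b*b = 1 := by rcases hb1 with h|h <;> subst h <;> norm_num
      exact_mod_cast this
    obtain ⟨t, ht⟩ : ∃ t : ℤ, b*(d-a) = t := ⟨_, rfl⟩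
    have htR : (t:ℝ) = 2*τ.re := by
      rw [← ht]; push_cast; linear_combination (b:ℝ)*hd' + 2*τ.re*hbbR
    have ht1 : t = -1 ∨ t = 0 := by
      have ha1 : (-1:ℝ) ≤ (t:ℝ) := by rw [htR]; linarith
      have ha2 : (t:ℝ) < 1 := by rw [htR]; linarith
      have h1' : -1 ≤ t := by exact_mod_cast ha1
      have h2' : t < 1 := by exact_mod_cast ha2
      omega
    have hbyy : (b:ℝ)^2*τ.im^2 = τ.im^2 := by linear_combination τ.im^2*hbbR
    rcases ht1 with ht1 | ht1
    · -- x = -1/2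
      rw [ht1] at htR
      push_cast at htR
      have hx : τ.re = -(1/2) := by linarith
      rw [hx] at hDR
      have hDR' : (2:ℝ) = ((a:ℝ) - b/2)^2 + τ.im^2 := by linear_combination hDR + hbyy
      have h5' : ((2*a-b : ℤ):ℝ)^2 ≤ 5 := by push_cast; linarith only [hDR', hy2]
      have h5i : (2*a-b)^2 ≤ 5 := by exact_mod_cast h5'
      have hsq1 : (2*a - b)^2 = 1 := by
        have t1 : 4*(2*a-b) ≤ 9 := by linarith only [sq_nonneg (2*a-b-2), h5i]
        have t2 : -9 ≤ 4*(2*a-b) := by linarith only [sq_nonneg (2*a-b+2), h5i]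
        have hbd1 : -2 ≤ 2*a - b := by omega
        have hbd2 : 2*a - b ≤ 2 := by omega
        rcases hb1 with h|h <;> subst h <;>
          (have : a = 0 ∨ a = 1 ∨ a = -1 := by omega) <;>
          rcases this with h'|h'|h' <;> subst h' <;> revert hbd1 hbd2 <;> norm_num
      have hsqR : ((2*a-b : ℤ):ℝ)^2 = 1 := by exact_mod_cast hsq1
      push_cast at hsqR
      have hy74 : τ.im^2 = 7/4 := by linarith only [hDR', hsqR]
      right; right
      apply Complex.ext <;>
        simp only [pow_two, Complex.mul_re, Complex.mul_im, Complex.sub_re, Complex.sub_im,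
          Complex.neg_re, Complex.neg_im, Complex.re_ofNat, Complex.im_ofNat] <;>
        rw [hx] <;> linarith only [hy74]
    · -- x = 0
      rw [ht1] at htR
      push_cast at htR
      have hx : τ.re = 0 := by linarith
      rw [hx] at hDR
      have hDR' : (2:ℝ) = (a:ℝ)^2 + τ.im^2 := by linear_combination hDR + hbyy
      rw [hx] at hxy
      have hy1 : 1 ≤ τ.im^2 := by linarith only [hxy]
      have haa : (a:ℝ)^2 ≤ 1 := by linarith only [hDR', hy1]
      have haa' : a^2 ≤ 1 := by exact_mod_cast haa
      have hcase : a = 0 ∨ a = 1 ∨ a = -1 := by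
        have t1 : 2*a ≤ 2 := by linarith only [sq_nonneg (a-1), haa']
        have t2 : -2 ≤ 2*a := by linarith only [sq_nonneg (a+1), haa']
        omega
      have hstep : (a:ℝ)^2 = 0 ∨ (a:ℝ)^2 = 1 := by
        rcases hcase with h|h|h <;> subst h <;> norm_num
      rcases hstep with hA | hA
      · have hy22 : τ.im^2 = 2 := by linarith only [hDR', hA]
        right; left
        apply Complex.ext <;>
          simp only [pow_two, Complex.mul_re, Complex.mul_im, Complex.neg_re, Complex.neg_im,
            Complex.re_ofNat, Complex.im_ofNat] <;>
          rw [hx] <;> linarith only [hy22]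
      · have hy12 : τ.im^2 = 1 := by linarith only [hDR', hA]
        left
        apply Complex.ext <;>
          simp only [pow_two, Complex.mul_re, Complex.mul_im, Complex.neg_re, Complex.neg_im,
            Complex.one_re, Complex.one_im] <;>
          rw [hx] <;> linarith only [hy12]
  · -- DD = 3 : impossible
    exfalso; subst h3; omega
  · -- DD = 4 : contradiction, lam L = L
    exfalso
    subst h4
    have hPP1 : PP = 1 := by omega
    rw [hPP1] at hPP
    have hα : (e*s - f*r)*p + (f*p - e*q)*r = e := by linear_combination e*hPP
    have hβ : (e*s - f*r)*q + (f*p - e*q)*s = f := by linear_combination f*hPP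
    apply hg
    refine ⟨e*s - f*r, f*p - e*q, ?_⟩
    have hαc : ((e*s - f*r : ℤ):ℂ)*(p:ℂ) + ((f*p - e*q : ℤ):ℂ)*(r:ℂ) = (e:ℂ) := by
      exact_mod_cast hα
    have hβc : ((e*s - f*r : ℤ):ℂ)*(q:ℂ) + ((f*p - e*q : ℤ):ℂ)*(s:ℂ) = (f:ℂ) := by
      exact_mod_cast hβ
    linear_combination -he + ((e*s - f*r:ℤ):ℂ)*hp + ((f*p - e*q:ℤ):ℂ)*hr - lam*hαc - lam*τ*hβc


theorem stmt_16 (τ : ℂ) (him : 0 < τ.im) (hre₁ : -(1 / 2) ≤ τ.re) (hre₂ : τ.re < 1 / 2)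
    (habs : 1 ≤ ‖τ‖) :
    (∃ g lam : ℂ, g ∉ latt τ ∧ (2 : ℂ) * g ∈ latt τ ∧
        (fun x => lam * x) '' latt τ = lattAdj τ g) ↔
    (τ ^ 2 = -1 ∨ τ ^ 2 = -2 ∨ τ ^ 2 = -τ - 2) := by
  have him' : τ.im ≠ 0 := ne_of_gt him
  constructor
  · rintro ⟨g, lam, hg, h2g, heq⟩
    exact fwdAux τ him hre₁ hre₂ habs g lam hg h2g heq
  · rintro (h | h | h)
    · exact revAuxI τ him' h
    · exact revAux τ him' 0 (by rw [h]; push_cast; ring)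
    · exact revAux τ him' (-1) (by rw [h]; push_cast; ring)
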